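/- Let n_1 ≥ n_2 ≥ 0 be integers with n_1 > n_2, and let Q_{n_1,n_2}(x) = Σ_{k=0}^{n_2} C(n_1 − 1/2, k)·C(n_1 + n_2 − k, n_1)·x^k. Then for every real x with |x| ≥ 16, |Q_{n_1,n_2}(x)| ≤ 2^{n_1+n_2−1}·(1 + |x|/2)^{n_2}. -/

import Mathlib

/-- Generalized binomial coefficient `C(α, k) = α(α−1)⋯(α−k+1)/k!` for real `α`. -/
noncomputable def gchooseR (α : ℝ) (k : ℕ) : ℝ :=
  (∏ i ∈ Finset.range k, (α - i)) / (Nat.factorial k)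

private lemma choose_le_two_pow_pred (m j : ℕ) (hm : 1 ≤ m) :
    Nat.choose m j ≤ 2 ^ (m - 1) := by
  obtain ⟨m', rfl⟩ : ∃ m', m = m' + 1 := ⟨m - 1, by omega⟩
  simp only [Nat.add_sub_cancel]
  have hb : ∀ i, Nat.choose m' i ≤ 2 ^ m' := by
    intro i
    rcases le_or_gt i m' with hi | hi
    · calc Nat.choose m' i ≤ ∑ t ∈ Finset.range (m' + 1), Nat.choose m' t :=
            Finset.single_le_sum (f := fun t => Nat.choose m' t)
              (fun _ _ => Nat.zero_le _) (Finset.mem_range.mpr (by omega))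
        _ = 2 ^ m' := Nat.sum_range_choose m'
    · rw [Nat.choose_eq_zero_of_lt hi]; exact Nat.zero_le _
  cases j with
  | zero => simpa using Nat.one_le_two_pow
  | succ j' =>
    rw [Nat.choose_succ_succ]
    rcases le_or_gt (j' + 1) m' with hj | hj
    · calc Nat.choose m' j' + Nat.choose m' (j' + 1)
          = ∑ t ∈ ({j', j' + 1} : Finset ℕ), Nat.choose m' t := by
            rw [Finset.sum_pair (by omega : j' ≠ j' + 1)]
        _ ≤ ∑ t ∈ Finset.range (m' + 1), Nat.choose m' t := by
            apply Finset.sum_le_sum_of_subset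
            intro t ht
            simp only [Finset.mem_insert, Finset.mem_singleton] at ht
            rcases ht with rfl | rfl <;> exact Finset.mem_range.mpr (by omega)
        _ = 2 ^ m' := Nat.sum_range_choose m'
    · rw [Nat.choose_eq_zero_of_lt hj, Nat.add_zero]
      exact hb j'

private lemma choose_identity (n1 n2 k : ℕ) (hk : k ≤ n2) (h : n2 ≤ n1) :
    Nat.choose n1 k * Nat.choose (n1 + n2 - k) n1
      = Nat.choose n2 k * Nat.choose (n1 + n2 - k) n2 := by
  have e1 := Nat.choose_mul (n := n1 + n2 - k) (k := n1) (s := k)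
    (by omega)
  have e2 := Nat.choose_mul (n := n1 + n2 - k) (k := n2) (s := k)
    hk
  have e3 : (n1 + n2 - k - k).choose (n1 - k) = (n1 + n2 - k - k).choose (n2 - k) := by
    have := Nat.choose_symm (n := n1 + n2 - k - k) (k := n1 - k) (by omega)
    rw [show n1 + n2 - k - k - (n1 - k) = n2 - k by omega] at this
    exact this.symm
  calc Nat.choose n1 k * Nat.choose (n1 + n2 - k) n1
      = Nat.choose (n1 + n2 - k) n1 * Nat.choose n1 k := mul_comm _ _
    _ = Nat.choose (n1 + n2 - k) k * (n1 + n2 - k - k).choose (n1 - k) := e1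
    _ = Nat.choose (n1 + n2 - k) k * (n1 + n2 - k - k).choose (n2 - k) := by rw [e3]
    _ = Nat.choose (n1 + n2 - k) n2 * Nat.choose n2 k := e2.symm
    _ = Nat.choose n2 k * Nat.choose (n1 + n2 - k) n2 := mul_comm _ _

private lemma gchooseR_abs_le (n1 k : ℕ) (hk : k ≤ n1) :
    |gchooseR ((n1 : ℝ) - 1 / 2) k| ≤ (Nat.choose n1 k : ℝ) := by
  unfold gchooseR
  have hfac : (0 : ℝ) < (Nat.factorial k : ℝ) := by
    exact_mod_cast Nat.factorial_pos k
  have hdF : (Nat.descFactorial n1 k : ℝ) = ∏ i ∈ Finset.range k, ((n1 : ℝ) - i) := by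
    rw [Nat.descFactorial_eq_prod_range, Nat.cast_prod]
    refine Finset.prod_congr rfl fun i hi => ?_
    have : i ≤ n1 := le_of_lt (lt_of_lt_of_le (Finset.mem_range.mp hi) hk)
    push_cast [Nat.cast_sub this]
    ring
  have hprod : |∏ i ∈ Finset.range k, ((n1 : ℝ) - 1 / 2 - i)|
      ≤ ∏ i ∈ Finset.range k, ((n1 : ℝ) - i) := by
    have hnn : ∀ i ∈ Finset.range k, (0 : ℝ) ≤ (n1 : ℝ) - 1 / 2 - i := by
      intro i hi
      have hi' : i + 1 ≤ n1 := lt_of_lt_of_le (Finset.mem_range.mp hi) hk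
      have : (i : ℝ) + 1 ≤ (n1 : ℝ) := by exact_mod_cast hi'
      linarith
    rw [abs_of_nonneg (Finset.prod_nonneg hnn)]
    apply Finset.prod_le_prod hnn
    intro i hi
    linarith
  rw [abs_div, abs_of_nonneg hfac.le, div_le_iff₀ hfac]
  calc |∏ i ∈ Finset.range k, ((n1 : ℝ) - 1 / 2 - i)|
      ≤ ∏ i ∈ Finset.range k, ((n1 : ℝ) - i) := hprod
    _ = (Nat.descFactorial n1 k : ℝ) := hdF.symm
    _ = (Nat.choose n1 k : ℝ) * (Nat.factorial k : ℝ) := by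
        rw [Nat.descFactorial_eq_factorial_mul_choose]
        push_cast; ring

/-- Bound for the Padé denominator: if `n₁ > n₂ ≥ 0` and `|x| ≥ 16`, then
`|Q_{n₁,n₂}(x)| ≤ 2^{n₁+n₂−1}·(1 + |x|/2)^{n₂}`. -/
theorem Q_bound (n1 n2 : ℕ) (h : n2 < n1) (x : ℝ) (hx : 16 ≤ |x|) :
    |∑ k ∈ Finset.range (n2 + 1),
        gchooseR ((n1 : ℝ) - 1 / 2) k * (Nat.choose (n1 + n2 - k) n1 : ℝ) * x ^ k| ≤
      2 ^ (n1 + n2 - 1) * (1 + |x| / 2) ^ n2 := by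
  have hy : (0 : ℝ) ≤ |x| := abs_nonneg x
  calc |∑ k ∈ Finset.range (n2 + 1),
        gchooseR ((n1 : ℝ) - 1 / 2) k * (Nat.choose (n1 + n2 - k) n1 : ℝ) * x ^ k|
      ≤ ∑ k ∈ Finset.range (n2 + 1),
        |gchooseR ((n1 : ℝ) - 1 / 2) k * (Nat.choose (n1 + n2 - k) n1 : ℝ) * x ^ k| :=
        Finset.abs_sum_le_sum_abs _ _
    _ ≤ ∑ k ∈ Finset.range (n2 + 1),
        2 ^ (n1 + n2 - 1) * (Nat.choose n2 k : ℝ) * (|x| / 2) ^ k := by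
        apply Finset.sum_le_sum
        intro k hk
        have hkn2 : k ≤ n2 := by
          have := Finset.mem_range.mp hk; omega
        rw [abs_mul, abs_mul, abs_pow, Nat.abs_cast]
        have step1 : |gchooseR ((n1 : ℝ) - 1 / 2) k| * (Nat.choose (n1 + n2 - k) n1 : ℝ)
            ≤ (Nat.choose n1 k : ℝ) * (Nat.choose (n1 + n2 - k) n1 : ℝ) := by
          apply mul_le_mul_of_nonneg_right (gchooseR_abs_le n1 k (by omega))
          positivity
        have hid : (Nat.choose n1 k : ℝ) * (Nat.choose (n1 + n2 - k) n1 : ℝ)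
            = (Nat.choose n2 k : ℝ) * (Nat.choose (n1 + n2 - k) n2 : ℝ) := by
          exact_mod_cast congrArg (Nat.cast (R := ℝ))
            (choose_identity n1 n2 k hkn2 h.le)
        have step2 : (Nat.choose (n1 + n2 - k) n2 : ℝ) ≤ 2 ^ (n1 + n2 - k - 1) := by
          calc (Nat.choose (n1 + n2 - k) n2 : ℝ)
              ≤ ((2 ^ (n1 + n2 - k - 1) : ℕ) : ℝ) := by
                exact_mod_cast choose_le_two_pow_pred (n1 + n2 - k) n2 (by omega)
            _ = 2 ^ (n1 + n2 - k - 1) := by push_cast; ring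
        have hpow : (2 : ℝ) ^ (n1 + n2 - k - 1) * |x| ^ k
            = 2 ^ (n1 + n2 - 1) * (|x| / 2) ^ k := by
          have h2 : (2 : ℝ) ^ (n1 + n2 - k - 1) * 2 ^ k = 2 ^ (n1 + n2 - 1) := by
            rw [← pow_add]; congr 1; omega
          rw [div_pow, ← h2]
          field_simp
        calc |gchooseR ((n1 : ℝ) - 1 / 2) k| * (Nat.choose (n1 + n2 - k) n1 : ℝ) * |x| ^ k
            ≤ (Nat.choose n1 k : ℝ) * (Nat.choose (n1 + n2 - k) n1 : ℝ) * |x| ^ k := by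
              apply mul_le_mul_of_nonneg_right step1 (by positivity)
          _ = (Nat.choose n2 k : ℝ) * (Nat.choose (n1 + n2 - k) n2 : ℝ) * |x| ^ k := by
              rw [hid]
          _ ≤ (Nat.choose n2 k : ℝ) * (2 ^ (n1 + n2 - k - 1)) * |x| ^ k := by
              apply mul_le_mul_of_nonneg_right _ (by positivity)
              exact mul_le_mul_of_nonneg_left step2 (by positivity)
          _ = (Nat.choose n2 k : ℝ) * ((2 : ℝ) ^ (n1 + n2 - k - 1) * |x| ^ k) := by ring
          _ = 2 ^ (n1 + n2 - 1) * (Nat.choose n2 k : ℝ) * (|x| / 2) ^ k := by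
              rw [hpow]; ring
    _ = 2 ^ (n1 + n2 - 1) * (1 + |x| / 2) ^ n2 := by
        have hbin : (1 + |x| / 2) ^ n2
            = ∑ k ∈ Finset.range (n2 + 1), (Nat.choose n2 k : ℝ) * (|x| / 2) ^ k := by
          rw [add_comm, add_pow]
          refine Finset.sum_congr rfl fun k _ => ?_
          rw [one_pow, mul_one, mul_comm]
        rw [hbin, Finset.mul_sum]
        refine Finset.sum_congr rfl fun k _ => by ring
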